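/- Let A be a d×d Hermitian matrix with non-increasingly ordered eigenvalue vector α, and let F, G : ℝ^d → ℂ^d be block-constant in a neighborhood of α and satisfy F(x) = G(x) + o(‖x − α‖₂) as x → α. Then 𝓛_F is Fréchet differentiable at A if and only if 𝓛_G is, and in that case their Fréchet derivatives at A coincide. -/

import Mathlib

open Matrix Filter Asymptotics

attribute [local instance] Matrix.frobeniusNormedAddCommGroup Matrix.frobeniusNormedSpace

namespace LFaux
variable {d : ℕ}

lemma frob_norm_sq (M : Matrix (Fin d) (Fin d) ℂ) :
    ‖M‖ ^ 2 = ∑ i, ∑ j, ‖M i j‖ ^ 2 := by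
  rw [frobenius_norm_def, ← Real.rpow_natCast _ 2, ← Real.rpow_mul (by positivity)]
  norm_num

lemma sum_sq_eq_trace_re (N : Matrix (Fin d) (Fin d) ℂ) :
    (∑ i, ∑ j, ‖N i j‖ ^ 2 : ℝ) = (Matrix.trace (N * Nᴴ)).re := by
  rw [Matrix.trace, Complex.re_sum]
  congr 1; ext i
  simp only [Matrix.diag, Matrix.mul_apply, Matrix.conjTranspose_apply, Complex.re_sum]
  congr 1; ext j
  rw [show star (N i j) = (starRingEnd ℂ) (N i j) from rfl, Complex.mul_conj]
  simp [Complex.normSq_eq_norm_sq, ← Complex.ofReal_pow]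

lemma frob_conj_unitary (V M : Matrix (Fin d) (Fin d) ℂ)
    (hV : V ∈ Matrix.unitaryGroup (Fin d) ℂ) :
    ‖V * M * star V‖ = ‖M‖ := by
  have h1 : star V * V = 1 := mem_unitaryGroup_iff'.mp hV
  have hsq : ‖V * M * star V‖ ^ 2 = ‖M‖ ^ 2 := by
    rw [frob_norm_sq, frob_norm_sq, sum_sq_eq_trace_re, sum_sq_eq_trace_re]
    congr 1
    have : (V * M * star V)ᴴ = V * Mᴴ * star V := by
      simp [Matrix.star_eq_conjTranspose, Matrix.conjTranspose_mul, Matrix.mul_assoc]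
    rw [this]
    have : V * M * star V * (V * Mᴴ * star V) = V * (M * Mᴴ) * star V := by
      rw [Matrix.star_eq_conjTranspose] at h1 ⊢
      calc V * M * Vᴴ * (V * Mᴴ * Vᴴ) = V * (M * ((Vᴴ * V) * Mᴴ)) * Vᴴ := by
            simp only [Matrix.mul_assoc]
        _ = V * (M * Mᴴ) * Vᴴ := by rw [h1, Matrix.one_mul, Matrix.mul_assoc]
    have h1' : Vᴴ * V = 1 := by rw [← Matrix.star_eq_conjTranspose]; exact h1
    rw [this, Matrix.trace_mul_cycle, Matrix.star_eq_conjTranspose]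
    rw [h1', Matrix.one_mul]
  have h2 := congrArg Real.sqrt hsq
  simpa [Real.sqrt_sq, norm_nonneg] using h2

lemma frob_diag_le (w : Fin d → ℂ) :
    ‖(Matrix.diagonal w : Matrix (Fin d) (Fin d) ℂ)‖ ≤ Real.sqrt d * ‖w‖ := by
  have hsq : ‖(Matrix.diagonal w : Matrix (Fin d) (Fin d) ℂ)‖ ^ 2 ≤ d * ‖w‖ ^ 2 := by
    rw [frob_norm_sq]
    have : ∀ i : Fin d, ∑ j, ‖Matrix.diagonal w i j‖ ^ 2 = ‖w i‖ ^ 2 := by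
      intro i
      rw [Finset.sum_eq_single i]
      · simp [Matrix.diagonal_apply_eq]
      · intro j _ hj; simp [Matrix.diagonal_apply_ne' w hj]
      · simp
    rw [Finset.sum_congr rfl fun i _ => this i]
    calc ∑ i : Fin d, ‖w i‖ ^ 2 ≤ ∑ _i : Fin d, ‖w‖ ^ 2 :=
          Finset.sum_le_sum fun i _ => by
            have := norm_le_pi_norm w i
            exact pow_le_pow_left₀ (norm_nonneg _) this 2
      _ = d * ‖w‖ ^ 2 := by simp [Finset.sum_const, mul_comm]
  have hrhs : Real.sqrt d * ‖w‖ = Real.sqrt (d * ‖w‖ ^ 2) := by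
    rw [Real.sqrt_mul (Nat.cast_nonneg d), Real.sqrt_sq (norm_nonneg _)]
  rw [hrhs]
  have := Real.sqrt_le_sqrt hsq
  simpa [Real.sqrt_sq, norm_nonneg] using this


lemma star_dot_unitary (V : Matrix (Fin d) (Fin d) ℂ) (h1 : star V * V = 1)
    (y y' : Fin d → ℂ) :
    star (V *ᵥ y) ⬝ᵥ (V *ᵥ y') = star y ⬝ᵥ y' := by
  rw [Matrix.star_mulVec, Matrix.dotProduct_mulVec, Matrix.vecMul_vecMul,
    ← Matrix.star_eq_conjTranspose, h1, Matrix.vecMul_one]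

lemma star_dot_self (w : Fin d → ℂ) :
    star w ⬝ᵥ w = ((∑ i, ‖w i‖ ^ 2 : ℝ) : ℂ) := by
  rw [dotProduct]
  push_cast
  congr 1; ext i
  rw [Pi.star_apply, show star (w i) = (starRingEnd ℂ) (w i) from rfl, mul_comm,
    Complex.mul_conj]
  simp [Complex.normSq_eq_norm_sq, ← Complex.ofReal_pow]

lemma star_dot_diag (w : Fin d → ℝ) (y : Fin d → ℂ) :
    star y ⬝ᵥ ((Matrix.diagonal (fun i => (w i : ℂ))) *ᵥ y)
      = ((∑ i, w i * ‖y i‖ ^ 2 : ℝ) : ℂ) := by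
  rw [dotProduct]
  push_cast
  congr 1; ext i
  rw [Matrix.mulVec_diagonal, Pi.star_apply,
    show star (y i) = (starRingEnd ℂ) (y i) from rfl]
  have : (starRingEnd ℂ) (y i) * ((w i : ℂ) * y i)
      = (w i : ℂ) * ((starRingEnd ℂ) (y i) * y i) := by ring
  rw [this, mul_comm ((starRingEnd ℂ) (y i)), Complex.mul_conj]
  simp [Complex.normSq_eq_norm_sq, ← Complex.ofReal_pow]

lemma frob_norm_sq' (M : Matrix (Fin d) (Fin d) ℂ) :
    ‖M‖ ^ 2 = ∑ i, ∑ j, ‖M i j‖ ^ 2 := by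
  rw [frobenius_norm_def, ← Real.rpow_natCast _ 2, ← Real.rpow_mul (by positivity)]
  norm_num

lemma quad_bound (M : Matrix (Fin d) (Fin d) ℂ) (x : Fin d → ℂ) :
    (star x ⬝ᵥ (M *ᵥ x)).re ≤ ‖M‖ * ∑ i, ‖x i‖ ^ 2 := by
  have h1 : (star x ⬝ᵥ (M *ᵥ x)).re ≤ ‖star x ⬝ᵥ (M *ᵥ x)‖ := Complex.re_le_norm _
  have h2 : ‖star x ⬝ᵥ (M *ᵥ x)‖ ≤ ∑ i, ∑ j, ‖M i j‖ * (‖x i‖ * ‖x j‖) := by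
    rw [dotProduct]
    refine (norm_sum_le _ _).trans (Finset.sum_le_sum fun i _ => ?_)
    rw [Matrix.mulVec, dotProduct, Finset.mul_sum]
    refine (norm_sum_le _ _).trans (Finset.sum_le_sum fun j _ => ?_)
    rw [norm_mul, norm_mul, Pi.star_apply, norm_star]
    ring_nf
    exact le_refl _
  refine h1.trans (h2.trans ?_)
  -- Cauchy–Schwarz
  have hcs := Finset.sum_mul_sq_le_sq_mul_sq (Finset.univ ×ˢ Finset.univ)
    (fun p : Fin d × Fin d => ‖M p.1 p.2‖) (fun p => ‖x p.1‖ * ‖x p.2‖)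
  rw [Finset.sum_product, Finset.sum_product, Finset.sum_product] at hcs
  have hM2 : (∑ i : Fin d, ∑ j : Fin d, ‖M i j‖ ^ 2) = ‖M‖ ^ 2 := (frob_norm_sq' M).symm
  have hx2 : (∑ i : Fin d, ∑ j : Fin d, (‖x i‖ * ‖x j‖) ^ 2) = (∑ i, ‖x i‖ ^ 2) ^ 2 := by
    rw [sq (∑ i, ‖x i‖ ^ 2), Finset.sum_mul_sum]
    congr 1; ext i; congr 1; ext j; ring
  rw [hM2, hx2] at hcs
  set S : ℝ := ∑ i : Fin d, ∑ j : Fin d, ‖M i j‖ * (‖x i‖ * ‖x j‖) with hS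
  have hSnn : 0 ≤ S :=
    Finset.sum_nonneg fun i _ => Finset.sum_nonneg fun j _ => by positivity
  have hRnn : 0 ≤ ‖M‖ * ∑ i, ‖x i‖ ^ 2 :=
    mul_nonneg (norm_nonneg _) (Finset.sum_nonneg fun i _ => sq_nonneg _)
  have hcs' : S ^ 2 ≤ (‖M‖ * ∑ i, ‖x i‖ ^ 2) ^ 2 := by rw [mul_pow]; exact hcs
  have := Real.sqrt_le_sqrt hcs'
  rw [Real.sqrt_sq hSnn, Real.sqrt_sq hRnn] at this
  exact this


noncomputable def coordKer (T : Set (Fin d)) : Submodule ℂ (Fin d → ℂ) :=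
  LinearMap.ker (LinearMap.funLeft ℂ ℂ ((↑) : T → Fin d))

lemma mem_coordKer {T : Set (Fin d)} {y : Fin d → ℂ} :
    y ∈ coordKer T ↔ ∀ i ∈ T, y i = 0 := by
  rw [coordKer, LinearMap.mem_ker]
  constructor
  · intro h i hi
    have := congrFun h ⟨i, hi⟩
    simpa [LinearMap.funLeft] using this
  · intro h
    funext t
    simpa [LinearMap.funLeft] using h t t.2

lemma finrank_coordKer (T : Set (Fin d)) [Fintype T] :
    Module.finrank ℂ (coordKer T) = d - Fintype.card T := by
  classical
  have h := LinearMap.finrank_range_add_finrank_ker (LinearMap.funLeft ℂ ℂ ((↑) : T → Fin d))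
  have hsurj : Function.Surjective (LinearMap.funLeft ℂ ℂ ((↑) : T → Fin d)) :=
    LinearMap.funLeft_surjective_of_injective ℂ ℂ _ Subtype.val_injective
  rw [LinearMap.range_eq_top.mpr hsurj] at h
  have h1 : Module.finrank ℂ (⊤ : Submodule ℂ (T → ℂ)) = Fintype.card T := by
    rw [finrank_top, Module.finrank_fintype_fun_eq_card]
  have h2 : Module.finrank ℂ (Fin d → ℂ) = d := by
    rw [Module.finrank_fintype_fun_eq_card, Fintype.card_fin]
  rw [h1, h2] at h
  rw [coordKer]
  omega

lemma exists_ne_zero_mem_inf (P Q : Submodule ℂ (Fin d → ℂ))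
    (h : d + 1 ≤ Module.finrank ℂ P + Module.finrank ℂ Q) :
    ∃ x : Fin d → ℂ, x ∈ P ⊓ Q ∧ x ≠ 0 := by
  have hsum := Submodule.finrank_sup_add_finrank_inf_eq P Q
  have hle : Module.finrank ℂ ↥(P ⊔ Q) ≤ d := by
    have := Submodule.finrank_le (P ⊔ Q)
    rwa [Module.finrank_fintype_fun_eq_card, Fintype.card_fin] at this
  have hpos : 0 < Module.finrank ℂ ↥(P ⊓ Q) := by omega
  have hne : P ⊓ Q ≠ ⊥ := by
    intro hbot
    rw [hbot, finrank_bot] at hpos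
    exact lt_irrefl _ hpos
  exact Submodule.exists_mem_ne_zero_of_ne_bot hne


lemma exists_antitone_decomp (B : Matrix (Fin d) (Fin d) ℂ) (hB : B.IsHermitian) :
    ∃ (V : Matrix (Fin d) (Fin d) ℂ) (ξ : Fin d → ℝ),
      V ∈ Matrix.unitaryGroup (Fin d) ℂ ∧ Antitone ξ ∧
      B = V * Matrix.diagonal (fun i => (ξ i : ℂ)) * star V := by
  classical
  set W : Matrix (Fin d) (Fin d) ℂ := (hB.eigenvectorUnitary : Matrix (Fin d) (Fin d) ℂ)
  have hW : W ∈ Matrix.unitaryGroup (Fin d) ℂ := hB.eigenvectorUnitary.2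
  set μ : Fin d → ℝ := hB.eigenvalues
  have hdec : B = W * Matrix.diagonal (RCLike.ofReal ∘ μ) * star W := hB.spectral_theorem
  -- sort: μ ∘ (Tuple.sort μ) is monotone; compose with reversal to get antitone
  set σ : Equiv.Perm (Fin d) := Tuple.sort μ
  set τ : Fin d ≃ Fin d := (Fin.revPerm).trans σ with hτ
  set ξ : Fin d → ℝ := μ ∘ τ with hξdef
  have hmono : Monotone (μ ∘ σ) := Tuple.monotone_sort μ
  have hanti : Antitone ξ := by
    intro a b hab
    have : Fin.rev b ≤ Fin.rev a := Fin.rev_le_rev.mpr hab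
    have := hmono this
    simpa [hξdef, hτ, Equiv.trans_apply, Fin.revPerm_apply] using this
  set V : Matrix (Fin d) (Fin d) ℂ := W.submatrix id τ with hVdef
  have hVmem : V ∈ Matrix.unitaryGroup (Fin d) ℂ := by
    rw [Matrix.mem_unitaryGroup_iff']
    have hW1 : star W * W = 1 := mem_unitaryGroup_iff'.mp hW
    rw [hVdef, Matrix.star_eq_conjTranspose, Matrix.conjTranspose_submatrix]
    have : Wᴴ.submatrix (τ : Fin d → Fin d) id * W.submatrix id (τ : Fin d → Fin d)
        = (Wᴴ * W).submatrix (τ : Fin d → Fin d) (τ : Fin d → Fin d) := by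
      rw [← Matrix.submatrix_mul_equiv Wᴴ W _ (Equiv.refl (Fin d)) _]
      rfl
    rw [this, ← Matrix.star_eq_conjTranspose, hW1, Matrix.submatrix_one_equiv]
  refine ⟨V, ξ, hVmem, hanti, ?_⟩
  have hdiag : Matrix.diagonal (fun i => (ξ i : ℂ))
      = (Matrix.diagonal (RCLike.ofReal ∘ μ)).submatrix (τ : Fin d → Fin d) (τ : Fin d → Fin d) := by
    rw [Matrix.submatrix_diagonal _ _ τ.injective]
    rfl
  rw [hdec, hVdef, hdiag, Matrix.star_eq_conjTranspose, Matrix.star_eq_conjTranspose,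
    Matrix.conjTranspose_submatrix]
  rw [Matrix.submatrix_mul_equiv W (Matrix.diagonal (RCLike.ofReal ∘ μ)) id τ ⇑τ,
    Matrix.submatrix_mul_equiv (W * Matrix.diagonal (RCLike.ofReal ∘ μ)) Wᴴ id τ id,
    Matrix.submatrix_id_id]
lemma weyl_oneside (U V A B : Matrix (Fin d) (Fin d) ℂ) (α ξ : Fin d → ℝ)
    (hU : U ∈ Matrix.unitaryGroup (Fin d) ℂ) (hV : V ∈ Matrix.unitaryGroup (Fin d) ℂ)
    (hα : Antitone α) (hξ : Antitone ξ)
    (hAdec : A = U * Matrix.diagonal (fun i => (α i : ℂ)) * star U)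
    (hBdec : B = V * Matrix.diagonal (fun i => (ξ i : ℂ)) * star V)
    (k : Fin d) :
    ξ k - α k ≤ ‖B - A‖ := by
  classical
  have hV1 : star V * V = 1 := mem_unitaryGroup_iff'.mp hV
  have hV2 : V * star V = 1 := mem_unitaryGroup_iff.mp hV
  have hU1 : star U * U = 1 := mem_unitaryGroup_iff'.mp hU
  have hU2 : U * star U = 1 := mem_unitaryGroup_iff.mp hU
  set eV : (Fin d → ℂ) ≃ₗ[ℂ] (Fin d → ℂ) :=
    LinearEquiv.ofLinear (Matrix.mulVecLin V) (Matrix.mulVecLin (star V))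
      (by rw [← Matrix.mulVecLin_mul, hV2, Matrix.mulVecLin_one])
      (by rw [← Matrix.mulVecLin_mul, hV1, Matrix.mulVecLin_one]) with heV
  set eU : (Fin d → ℂ) ≃ₗ[ℂ] (Fin d → ℂ) :=
    LinearEquiv.ofLinear (Matrix.mulVecLin U) (Matrix.mulVecLin (star U))
      (by rw [← Matrix.mulVecLin_mul, hU2, Matrix.mulVecLin_one])
      (by rw [← Matrix.mulVecLin_mul, hU1, Matrix.mulVecLin_one]) with heU
  set P : Submodule ℂ (Fin d → ℂ) := (coordKer (Set.Ioi k)).map (eV : (Fin d → ℂ) →ₗ[ℂ] _)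
  set Q : Submodule ℂ (Fin d → ℂ) := (coordKer (Set.Iio k)).map (eU : (Fin d → ℂ) →ₗ[ℂ] _)
  have hrankP : Module.finrank ℂ P = d - (d - 1 - (k : ℕ)) := by
    rw [LinearEquiv.finrank_map_eq, finrank_coordKer, Fintype.card_Ioi, Fin.card_Ioi]
  have hrankQ : Module.finrank ℂ Q = d - (k : ℕ) := by
    rw [LinearEquiv.finrank_map_eq, finrank_coordKer, Fintype.card_Iio, Fin.card_Iio]
  obtain ⟨x, hxPQ, hx0⟩ := exists_ne_zero_mem_inf P Q (by
    rw [hrankP, hrankQ]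
    have : (k : ℕ) < d := k.isLt
    omega)
  obtain ⟨y, hy, hyx⟩ := Submodule.mem_map.mp hxPQ.1
  obtain ⟨z, hz, hzx⟩ := Submodule.mem_map.mp hxPQ.2
  have hyx' : V *ᵥ y = x := hyx
  have hzx' : U *ᵥ z = x := hzx
  set c : ℝ := ∑ i, ‖x i‖ ^ 2 with hc
  have hcpos : 0 < c := by
    obtain ⟨i, hi⟩ := Function.ne_iff.mp hx0
    refine Finset.sum_pos' (fun j _ => by positivity) ⟨i, Finset.mem_univ i, ?_⟩
    have : ‖x i‖ ≠ 0 := norm_ne_zero_iff.mpr hi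
    positivity
  have hy2 : ∑ i, ‖y i‖ ^ 2 = c := by
    have h := star_dot_unitary V hV1 y y
    rw [hyx', star_dot_self, star_dot_self] at h
    exact_mod_cast h.symm
  have hz2 : ∑ i, ‖z i‖ ^ 2 = c := by
    have h := star_dot_unitary U hU1 z z
    rw [hzx', star_dot_self, star_dot_self] at h
    exact_mod_cast h.symm
  have hyS : ∀ i, k < i → y i = 0 := fun i hi => mem_coordKer.mp hy i (Set.mem_Ioi.mpr hi)
  have hzS : ∀ i, i < k → z i = 0 := fun i hi => mem_coordKer.mp hz i (Set.mem_Iio.mpr hi)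
  -- quadratic forms
  have hquad : ∀ (W D : Matrix (Fin d) (Fin d) ℂ) (u : Fin d → ℂ), star W * W = 1 →
      (W * D * star W) *ᵥ (W *ᵥ u) = W *ᵥ (D *ᵥ u) := by
    intro W D u hW1
    rw [Matrix.mulVec_mulVec, Matrix.mul_assoc (W * D), hW1, Matrix.mul_one,
      ← Matrix.mulVec_mulVec]
  have hqB : (star x ⬝ᵥ (B *ᵥ x)).re = ∑ i, ξ i * ‖y i‖ ^ 2 := by
    have hmv : B *ᵥ x = V *ᵥ ((Matrix.diagonal (fun i => (ξ i : ℂ))) *ᵥ y) := by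
      rw [← hyx', hBdec, hquad _ _ _ hV1]
    rw [hmv, ← hyx', star_dot_unitary V hV1, star_dot_diag]
    exact Complex.ofReal_re _
  have hqA : (star x ⬝ᵥ (A *ᵥ x)).re = ∑ i, α i * ‖z i‖ ^ 2 := by
    have hmv : A *ᵥ x = U *ᵥ ((Matrix.diagonal (fun i => (α i : ℂ))) *ᵥ z) := by
      rw [← hzx', hAdec, hquad _ _ _ hU1]
    rw [hmv, ← hzx', star_dot_unitary U hU1, star_dot_diag]
    exact Complex.ofReal_re _
  have hlow : ξ k * c ≤ ∑ i, ξ i * ‖y i‖ ^ 2 := by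
    rw [← hy2, Finset.mul_sum, ← sub_nonneg, ← Finset.sum_sub_distrib]
    refine Finset.sum_nonneg fun i _ => ?_
    rcases le_or_gt i k with hik | hik
    · have := hξ hik
      nlinarith [sq_nonneg ‖y i‖]
    · rw [hyS i hik]
      simp
  have hup : ∑ i, α i * ‖z i‖ ^ 2 ≤ α k * c := by
    rw [← hz2, Finset.mul_sum, ← sub_nonneg, ← Finset.sum_sub_distrib]
    refine Finset.sum_nonneg fun i _ => ?_
    rcases lt_or_ge i k with hik | hik
    · rw [hzS i hik]
      simp
    · have := hα hik
      nlinarith [sq_nonneg ‖z i‖]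
  have hdiff : (star x ⬝ᵥ ((B - A) *ᵥ x)).re
      = (∑ i, ξ i * ‖y i‖ ^ 2) - ∑ i, α i * ‖z i‖ ^ 2 := by
    rw [Matrix.sub_mulVec, dotProduct_sub, Complex.sub_re, hqB, hqA]
  have hbound := quad_bound (B - A) x
  rw [hdiff] at hbound
  have : (ξ k - α k) * c ≤ ‖B - A‖ * c := by
    have h1 : (ξ k - α k) * c = ξ k * c - α k * c := by ring
    rw [h1]
    calc ξ k * c - α k * c ≤ (∑ i, ξ i * ‖y i‖ ^ 2) - ∑ i, α i * ‖z i‖ ^ 2 := by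
          exact sub_le_sub hlow hup
      _ ≤ ‖B - A‖ * c := hbound
  exact le_of_mul_le_mul_right this hcpos

end LFaux

open LFaux


/-- **Lemma (first-order data determines the derivative of `𝓛_F`).**
Let `A` be Hermitian with non-increasingly ordered eigenvalue vector `α`, and
let `F, G : ℝ^d → ℂ^d` be block-constant in a neighborhood `s` of `α` with
`F(x) = G(x) + o(‖x − α‖)` as `x → α`.  Then `𝓛_F` is Fréchet differentiable
at `A` (as a map on the real normed space of Hermitian matrices) if and only
if `𝓛_G` is, and their Fréchet derivatives at `A` coincide. -/
theorem LF_differentiable_iff_of_littleO {d : ℕ}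
    (F G : (Fin d → ℝ) → Fin d → ℂ)
    (A U : Matrix (Fin d) (Fin d) ℂ) (α : Fin d → ℝ)
    (LF LG : Matrix (Fin d) (Fin d) ℂ → Matrix (Fin d) (Fin d) ℂ)
    (s : Set (Fin d → ℝ))
    (hA : A.IsHermitian)
    (hU : U ∈ Matrix.unitaryGroup (Fin d) ℂ)
    (hα : Antitone α)
    (hAdec : A = U * Matrix.diagonal (fun i => (α i : ℂ)) * star U)
    -- `F` and `G` are block-constant in the neighborhood `s` of `α`:
    (hs : s ∈ nhds α)
    (hbcF : ∀ x ∈ s, ∀ m n, x m = x n → F x m = F x n)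
    (hbcG : ∀ x ∈ s, ∀ m n, x m = x n → G x m = G x n)
    -- `F(x) = G(x) + o(‖x − α‖₂)` as `x → α`:
    (ho : (fun x => F x - G x) =o[nhds α] (fun x => x - α))
    -- `LF` and `LG` are the matrix functions `𝓛_F` and `𝓛_G`:
    (hLF : ∀ (B V : Matrix (Fin d) (Fin d) ℂ) (ξ : Fin d → ℝ),
      V ∈ Matrix.unitaryGroup (Fin d) ℂ → Antitone ξ → ξ ∈ s →
      B = V * Matrix.diagonal (fun i => (ξ i : ℂ)) * star V →
      LF B = V * Matrix.diagonal (F ξ) * star V)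
    (hLG : ∀ (B V : Matrix (Fin d) (Fin d) ℂ) (ξ : Fin d → ℝ),
      V ∈ Matrix.unitaryGroup (Fin d) ℂ → Antitone ξ → ξ ∈ s →
      B = V * Matrix.diagonal (fun i => (ξ i : ℂ)) * star V →
      LG B = V * Matrix.diagonal (G ξ) * star V) :
    ∀ L : Matrix (Fin d) (Fin d) ℂ →L[ℝ] Matrix (Fin d) (Fin d) ℂ,
      HasFDerivWithinAt LF L {B | B.IsHermitian} A ↔
      HasFDerivWithinAt LG L {B | B.IsHermitian} A := by
  intro L
  have hαs : α ∈ s := mem_of_mem_nhds hs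
  have hFGα : F α = G α := by
    have h := (isLittleO_iff.mp ho one_pos).self_of_nhds
    rw [sub_self, norm_zero, mul_zero] at h
    exact sub_eq_zero.mp (norm_le_zero_iff.mp h)
  have hLFA : LF A = LG A := by
    rw [hLF A U α hU hα hαs hAdec, hLG A U α hU hα hαs hAdec, hFGα]
  -- key little-o estimate for LF - LG
  have KEY : (fun B => LF B - LG B)
      =o[nhdsWithin A {B | B.IsHermitian}] (fun B => B - A) := by
    rw [isLittleO_iff]
    intro c hc
    have hsd : (0:ℝ) < Real.sqrt d + 1 := by positivity
    set ε := c / (Real.sqrt d + 1) with hε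
    have hεpos : 0 < ε := div_pos hc hsd
    have hkey : Real.sqrt d * ε ≤ c := by
      have h1 : Real.sqrt d / (Real.sqrt d + 1) ≤ 1 := by
        rw [div_le_one hsd]; linarith
      calc Real.sqrt d * (c / (Real.sqrt d + 1)) = c * (Real.sqrt d / (Real.sqrt d + 1)) := by
            ring
        _ ≤ c * 1 := mul_le_mul_of_nonneg_left h1 hc.le
        _ = c := mul_one c
    have hev := isLittleO_iff.mp ho hεpos
    have hst : s ∩ {x | ‖F x - G x‖ ≤ ε * ‖x - α‖} ∈ nhds α := Filter.inter_mem hs hev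
    obtain ⟨δ, hδpos, hδsub⟩ := Metric.mem_nhds_iff.mp hst
    rw [eventually_nhdsWithin_iff]
    refine Metric.eventually_nhds_iff.mpr ⟨δ, hδpos, fun B hBd hB => ?_⟩
    obtain ⟨V, ξ, hV, hξ, hBdec⟩ := exists_antitone_decomp B hB
    have hBA : ‖B - A‖ < δ := by rwa [← dist_eq_norm]
    have hweyl : ∀ k, |ξ k - α k| ≤ ‖B - A‖ := by
      intro k
      rw [abs_sub_le_iff]
      refine ⟨weyl_oneside U V A B α ξ hU hV hα hξ hAdec hBdec k, ?_⟩
      have := weyl_oneside V U B A ξ α hV hU hξ hα hBdec hAdec k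
      rwa [norm_sub_rev] at this
    have hvecnorm : ‖ξ - α‖ ≤ ‖B - A‖ := by
      refine (pi_norm_le_iff_of_nonneg (norm_nonneg _)).mpr fun i => ?_
      rw [Pi.sub_apply, Real.norm_eq_abs]
      exact hweyl i
    have hξball : ξ ∈ Metric.ball α δ := by
      rw [Metric.mem_ball, dist_eq_norm]
      exact lt_of_le_of_lt hvecnorm hBA
    obtain ⟨hξs, hξt⟩ := hδsub hξball
    rw [hLF B V ξ hV hξ hξs hBdec, hLG B V ξ hV hξ hξs hBdec]
    have hdiff : V * Matrix.diagonal (F ξ) * star V - V * Matrix.diagonal (G ξ) * star V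
        = V * Matrix.diagonal (F ξ - G ξ) * star V := by
      rw [← Matrix.sub_mul, ← Matrix.mul_sub, Matrix.diagonal_sub]
      rfl
    rw [hdiff, frob_conj_unitary V _ hV]
    calc ‖(Matrix.diagonal (F ξ - G ξ) : Matrix (Fin d) (Fin d) ℂ)‖
        ≤ Real.sqrt d * ‖F ξ - G ξ‖ := frob_diag_le _
      _ ≤ Real.sqrt d * (ε * ‖ξ - α‖) := by
          refine mul_le_mul_of_nonneg_left hξt (Real.sqrt_nonneg _)
      _ = (Real.sqrt d * ε) * ‖ξ - α‖ := by ring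
      _ ≤ c * ‖B - A‖ := mul_le_mul hkey hvecnorm (norm_nonneg _) hc.le
  have hH : HasFDerivWithinAt (fun B => LF B - LG B)
      (0 : Matrix (Fin d) (Fin d) ℂ →L[ℝ] Matrix (Fin d) (Fin d) ℂ) {B | B.IsHermitian} A := by
    refine hasFDerivWithinAt_iff_isLittleO.mpr (KEY.congr_left fun B => ?_)
    rw [hLFA, sub_self, sub_zero]
    exact (sub_zero _).symm
  constructor
  · intro hF
    have h2 := hF.sub hH
    have e1 : (LF - fun B => LF B - LG B) = LG := by funext B; simp
    rw [e1] at h2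
    exact h2.congr_fderiv (sub_zero _)
  · intro hG
    have h2 := hG.add hH
    have e1 : (LG + fun B => LF B - LG B) = LF := by funext B; simp
    rw [e1] at h2
    exact h2.congr_fderiv (add_zero _)
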